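/- Let (C,·,n) be a Hurwitz algebra over a field k with dim_k C ≥ 4, let G be a group, and let (C_g)_{g∈G} be a family of k-subspaces with C = ⊕_{g∈G} C_g. Define x•y := x̄·ȳ on C. Then C_g · C_h ⊆ C_{gh} holds for all g, h ∈ G if and only if C_g • C_h ⊆ C_{gh} holds for all g, h ∈ G; that is, the group gradings of the Hurwitz algebra (C,·,n) and of its para-Hurwitz algebra (C,•,n) coincide. -/

import Mathlib

open QuadraticMap

section HurwitzAux

variable {k : Type*} [Field k] {C : Type*} [AddCommGroup C] [Module k C]
variable (mul : C →ₗ[k] C →ₗ[k] C) (n : QuadraticForm k C)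

lemma hpm_right (hcomp : ∀ x y : C, n (mul x y) = n x * n y) (x y z : C) :
    polar n (mul x y) (mul x z) = n x * polar n y z := by
  have h1 : mul x (y + z) = mul x y + mul x z := map_add _ _ _
  have h2 := hcomp x (y + z)
  rw [h1] at h2
  rw [QuadraticMap.polar, QuadraticMap.polar, h2, hcomp x y, hcomp x z]
  ring

lemma hpm_left (hcomp : ∀ x y : C, n (mul x y) = n x * n y) (x y z : C) :
    polar n (mul x z) (mul y z) = polar n x y * n z := by
  have h1 : mul (x + y) z = mul x z + mul y z := by rw [map_add]; rfl
  have h2 := hcomp (x + y) z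
  rw [h1] at h2
  rw [QuadraticMap.polar, QuadraticMap.polar, h2, hcomp x z, hcomp y z]
  ring

lemma hpm_F2 (hcomp : ∀ x y : C, n (mul x y) = n x * n y) (x y z w : C) :
    polar n (mul x y) (mul z w) + polar n (mul x w) (mul z y)
      = polar n x z * polar n y w := by
  have h1 : polar n (mul (x + z) y) (mul (x + z) w) = n (x + z) * polar n y w :=
    hpm_right mul n hcomp _ _ _
  have hxz : ∀ u : C, mul (x + z) u = mul x u + mul z u := by
    intro u; rw [map_add]; rfl
  rw [hxz y, hxz w, polar_add_left, polar_add_right, polar_add_right] at h1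
  rw [hpm_right mul n hcomp x y w, hpm_right mul n hcomp z y w] at h1
  have hnxz : n (x + z) = n x + n z + polar n x z := QuadraticMap.map_add n x z
  rw [hnxz] at h1
  have hc : polar n (mul z y) (mul x w) = polar n (mul x w) (mul z y) := polar_comm _ _ _
  rw [hc] at h1
  linear_combination h1

end HurwitzAux

section HurwitzAux2

variable {k : Type*} [Field k] {C : Type*} [AddCommGroup C] [Module k C]
variable (mul : C →ₗ[k] C →ₗ[k] C) (n : QuadraticForm k C) (e : C)

lemma quad_id
    (hnondeg : ∀ x : C, (∀ y : C, polar n x y = 0) → x = 0)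
    (hcomp : ∀ x y : C, n (mul x y) = n x * n y)
    (hle : ∀ x : C, mul e x = x) (hre : ∀ x : C, mul x e = x) (x : C) :
    mul x x = polar n x e • x - n x • e := by
  have key : ∀ z : C, polar n (mul x x) z
      = polar n x e * polar n x z - n x * polar n e z := by
    intro z
    have h1 := hpm_F2 mul n hcomp x x z e
    rw [hre z, hre x] at h1
    have h2 : polar n x (mul z x) = polar n e z * n x := by
      have := hpm_left mul n hcomp e z x
      rw [hle x] at this; exact this
    rw [h2] at h1
    linear_combination h1
  have h0 : ∀ z : C, polar n (mul x x - (polar n x e • x - n x • e)) z = 0 := by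
    intro z
    rw [polar_sub_left, polar_sub_left, polar_smul_left, polar_smul_left, key z,
      smul_eq_mul, smul_eq_mul]
    have : polar n e z = polar n z e := polar_comm _ _ _
    rw [this]
    have : polar n x z = polar n z x := polar_comm _ _ _
    rw [this]
    ring
  have := hnondeg _ h0
  rw [sub_eq_zero] at this
  exact this

lemma quad_lin
    (hnondeg : ∀ x : C, (∀ y : C, polar n x y = 0) → x = 0)
    (hcomp : ∀ x y : C, n (mul x y) = n x * n y)
    (hle : ∀ x : C, mul e x = x) (hre : ∀ x : C, mul x e = x) (x y : C) :
    mul x y + mul y x = polar n x e • y + polar n y e • x - polar n x y • e := by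
  have hxy := quad_id mul n e hnondeg hcomp hle hre (x + y)
  have hx := quad_id mul n e hnondeg hcomp hle hre x
  have hy := quad_id mul n e hnondeg hcomp hle hre y
  have hexp : mul (x + y) (x + y) = mul x x + mul x y + mul y x + mul y y := by
    rw [map_add]
    simp only [LinearMap.add_apply, map_add]
    abel
  rw [hexp, hx, hy] at hxy
  have hp : polar n (x + y) e = polar n x e + polar n y e := polar_add_left _ _ _ _
  have hn : n (x + y) = n x + n y + polar n x y := QuadraticMap.map_add n x y
  rw [hp, hn] at hxy
  have h3 : mul x y + mul y x =
      ((polar n x e + polar n y e) • (x + y) - (n x + n y + polar n x y) • e)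
        - (polar n x e • x - n x • e) - (polar n y e • y - n y • e) := by
    rw [← hxy]; abel
  rw [h3]
  module
  
end HurwitzAux2
section HurwitzAux3
open QuadraticMap
variable {k : Type*} [Field k] {C : Type*} [AddCommGroup C] [Module k C]
variable (mul : C →ₗ[k] C →ₗ[k] C) (n : QuadraticForm k C) (e : C)

lemma cancel_r
    (hnondeg : ∀ x : C, (∀ y : C, polar n x y = 0) → x = 0)
    (hcomp : ∀ x y : C, n (mul x y) = n x * n y)
    (hre : ∀ x : C, mul x e = x) (z u : C) :
    mul (mul z u) (polar n u e • e - u) = n u • z := by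
  have key : ∀ w : C, polar n (mul (mul z u) u) w
      = polar n u e * polar n (mul z u) w - polar n z w * n u := by
    intro w
    have h1 := hpm_F2 mul n hcomp (mul z u) u w e
    rw [hre w, hre (mul z u)] at h1
    have h2 : polar n (mul z u) (mul w u) = polar n z w * n u :=
      hpm_left mul n hcomp z w u
    rw [h2] at h1
    linear_combination h1
  have h0 : ∀ w : C, polar n (mul (mul z u) (polar n u e • e - u) - n u • z) w = 0 := by
    intro w
    have hexp : mul (mul z u) (polar n u e • e - u)
        = polar n u e • (mul z u) - mul (mul z u) u := by
      rw [_root_.map_sub, _root_.map_smul]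
      rw [hre (mul z u)]
    rw [hexp, polar_sub_left, polar_sub_left, polar_smul_left, polar_smul_left, key w,
      smul_eq_mul, smul_eq_mul]
    ring
  have := hnondeg _ h0
  rwa [sub_eq_zero] at this

lemma polar_ee (hne : n e = 1) : polar n e e = 2 := by
  rw [polar_self, hne]
  norm_num

lemma cj_a (hne : n e = 1) (x : C) :
    polar n (polar n x e • e - x) e = polar n x e := by
  rw [polar_sub_left, polar_smul_left, polar_ee n e hne, smul_eq_mul]
  ring

lemma cj_cj (hne : n e = 1) (x : C) :
    polar n (polar n x e • e - x) e • e - (polar n x e • e - x) = x := by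
  rw [cj_a n e hne]
  abel

lemma cj_smul (s : k) (x : C) :
    polar n (s • x) e • e - s • x = s • (polar n x e • e - x) := by
  rw [polar_smul_left, smul_eq_mul, smul_sub, smul_smul]

lemma cj_zero : polar n (0 : C) e • e - 0 = 0 := by
  rw [polar_zero_left]
  simp

lemma n_cj (hne : n e = 1) (x : C) : n (polar n x e • e - x) = n x := by
  rw [sub_eq_add_neg, QuadraticMap.map_add (⇑n), QuadraticMap.map_neg, polar_neg_right,
    polar_smul_left, QuadraticMap.map_smul, hne, smul_eq_mul, smul_eq_mul]
  have hc : polar (⇑n) e x = polar (⇑n) x e := polar_comm _ _ _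
  rw [hc]
  ring

lemma n_sub' (x y : C) : n (x - y) = n x + n y - polar n x y := by
  rw [sub_eq_add_neg, QuadraticMap.map_add (⇑n), QuadraticMap.map_neg, polar_neg_right]
  ring

end HurwitzAux3
section Grading
open QuadraticMap DirectSum
variable {k : Type*} [Field k] {C : Type*} [AddCommGroup C] [Module k C]
variable {G : Type*} [DecidableEq G]

/-- conjugation as a linear map -/
noncomputable def cjL (n : QuadraticForm k C) (e : C) : C →ₗ[k] C :=
  LinearMap.smulRight ((polarBilin n).flip e) e - LinearMap.id

lemma cjL_apply (n : QuadraticForm k C) (e x : C) :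
    cjL n e x = polar n x e • e - x := by
  simp [cjL, LinearMap.smulRight_apply, LinearMap.sub_apply]

/-- projection onto a component -/
noncomputable def prj (A : G → Submodule k C) (hdecomp : DirectSum.IsInternal A) (g : G) :
    C →ₗ[k] C :=
  (A g).subtype ∘ₗ DirectSum.component k G (fun i => ↥(A i)) g ∘ₗ
    (LinearEquiv.ofBijective (DirectSum.coeLinearMap A) hdecomp).symm.toLinearMap

lemma prj_mem (A : G → Submodule k C) (hdecomp : DirectSum.IsInternal A) (g : G) (x : C) :
    prj A hdecomp g x ∈ A g := by
  simp [prj]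

lemma prj_of_mem (A : G → Submodule k C) (hdecomp : DirectSum.IsInternal A) {g : G} {x : C}
    (hx : x ∈ A g) : prj A hdecomp g x = x := by
  have h1 := hdecomp.ofBijective_coeLinearMap_of_mem hx
  show ((A g).subtype) (DirectSum.component k G (fun i => ↥(A i)) g
    ((LinearEquiv.ofBijective (DirectSum.coeLinearMap A) hdecomp).symm x)) = x
  rw [← DirectSum.apply_eq_component, h1]
  rfl

lemma prj_of_mem_ne (A : G → Submodule k C) (hdecomp : DirectSum.IsInternal A) {g h : G} {x : C}
    (hx : x ∈ A g) (hgh : g ≠ h) : prj A hdecomp h x = 0 := by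
  have h1 := hdecomp.ofBijective_coeLinearMap_of_mem_ne hgh hx
  show ((A h).subtype) (DirectSum.component k G (fun i => ↥(A i)) h
    ((LinearEquiv.ofBijective (DirectSum.coeLinearMap A) hdecomp).symm x)) = 0
  rw [← DirectSum.apply_eq_component, h1]
  rfl

lemma prj_exists_sum (A : G → Submodule k C) (hdecomp : DirectSum.IsInternal A) (x : C) :
    ∃ s : Finset G, x = ∑ i ∈ s, prj A hdecomp i x ∧ (∀ i ∉ s, prj A hdecomp i x = 0)
      ∧ ∀ i ∈ s, prj A hdecomp i x ≠ 0 := by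
  classical
  set E := LinearEquiv.ofBijective (DirectSum.coeLinearMap A) hdecomp with hE
  set f := E.symm x with hf
  have hfx : ∀ i, prj A hdecomp i x = ↑(f i) := fun i => rfl
  refine ⟨f.support, ?_, ?_, ?_⟩
  · have h1 : (∑ i ∈ f.support, DirectSum.of (fun i => ↥(A i)) i (f i)) = f :=
      DirectSum.sum_support_of f
    have h2 := congrArg E h1
    rw [map_sum] at h2
    have h3 : ∀ i, E (DirectSum.of (fun i => ↥(A i)) i (f i)) = ↑(f i) := by
      intro i
      show (DirectSum.coeLinearMap A) (DirectSum.of (fun i => ↥(A i)) i (f i)) = _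
      exact DirectSum.coeLinearMap_of A i (f i)
    calc x = E f := (E.apply_symm_apply x).symm
    _ = ∑ i ∈ f.support, prj A hdecomp i x := by
        rw [← h2]; exact Finset.sum_congr rfl (fun i _ => (h3 i).trans (hfx i).symm)
  · intro i hi
    rw [hfx i, DFinsupp.notMem_support_iff.mp hi]; rfl
  · intro i hi
    rw [hfx i]
    exact fun hc => (DFinsupp.mem_support_iff.mp hi) (by exact_mod_cast hc)

end Grading
section GradingLemmas
open QuadraticMap DirectSum
variable {k : Type*} [Field k] {C : Type*} [AddCommGroup C] [Module k C]
variable {G : Type*} [Group G] [DecidableEq G]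
variable (mul : C →ₗ[k] C →ₗ[k] C) (n : QuadraticForm k C) (e : C)
variable (A : G → Submodule k C)

lemma cjL_e (hne : n e = 1) : cjL n e e = e := by
  rw [cjL_apply, polar_ee n e hne, two_smul]; abel

lemma cjL_cjL (hne : n e = 1) (x : C) : cjL n e (cjL n e x) = x := by
  rw [cjL_apply, cjL_apply]; exact cj_cj n e hne x

lemma a_cjL (hne : n e = 1) (x : C) : polar n (cjL n e x) e = polar n x e := by
  rw [cjL_apply]; exact cj_a n e hne x

lemma n_cjL (hne : n e = 1) (x : C) : n (cjL n e x) = n x := by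
  rw [cjL_apply]; exact n_cj n e hne x

lemma dagger (hne : n e = 1) (hre : ∀ x : C, mul x e = x)
    (hdecomp : DirectSum.IsInternal A)
    (hp : ∀ g h : G, ∀ x ∈ A g, ∀ y ∈ A h, mul (cjL n e x) (cjL n e y) ∈ A (g * h))
    (g : G) (x : C) (hx : x ∈ A g) (h : G) :
    mul (cjL n e x) (cjL n e (prj A hdecomp h e))
      = polar n x e • prj A hdecomp (g * h) e - (if h = 1 then x else 0) := by
  obtain ⟨s, hs, hs0, -⟩ := prj_exists_sum A hdecomp e
  have hsum : ∑ l ∈ s, cjL n e (prj A hdecomp l e) = cjL n e e := by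
    rw [← map_sum]; congr 1; exact hs.symm
  have hdec : ∑ l ∈ s, mul (cjL n e x) (cjL n e (prj A hdecomp l e)) = cjL n e x := by
    rw [← map_sum, hsum, cjL_e n e hne, hre]
  have h5 := congrArg (prj A hdecomp (g * h)) hdec
  rw [map_sum] at h5
  have hT : ∀ l ∈ s, prj A hdecomp (g * h) (mul (cjL n e x) (cjL n e (prj A hdecomp l e)))
      = if l = h then mul (cjL n e x) (cjL n e (prj A hdecomp h e)) else 0 := by
    intro l _
    by_cases hlh : l = h
    · subst hlh
      rw [if_pos rfl]
      exact prj_of_mem A hdecomp (hp g l x hx _ (prj_mem A hdecomp l e))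
    · rw [if_neg hlh]
      refine prj_of_mem_ne A hdecomp (hp g l x hx _ (prj_mem A hdecomp l e)) ?_
      exact fun hc => hlh (mul_left_cancel hc)
  rw [Finset.sum_congr rfl hT, Finset.sum_ite_eq' s h] at h5
  have hL : prj A hdecomp (g * h) (cjL n e x)
      = polar n x e • prj A hdecomp (g * h) e - (if h = 1 then x else 0) := by
    rw [cjL_apply, _root_.map_sub, _root_.map_smul]
    congr 1
    by_cases h1 : h = 1
    · subst h1
      rw [if_pos rfl, mul_one]
      exact prj_of_mem A hdecomp hx
    · rw [if_neg h1]
      refine prj_of_mem_ne A hdecomp hx ?_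
      intro hc
      exact h1 (by rwa [left_eq_mul] at hc)
  by_cases hh : h ∈ s
  · rw [if_pos hh] at h5
    rw [h5, hL]
  · rw [if_neg hh] at h5
    have hz : prj A hdecomp h e = 0 := hs0 h hh
    rw [hz, map_zero (cjL n e), map_zero]
    exact h5.trans hL

lemma ddagger (hne : n e = 1) (hle : ∀ x : C, mul e x = x)
    (hdecomp : DirectSum.IsInternal A)
    (hp : ∀ g h : G, ∀ x ∈ A g, ∀ y ∈ A h, mul (cjL n e x) (cjL n e y) ∈ A (g * h))
    (g : G) (x : C) (hx : x ∈ A g) (h : G) :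
    mul (cjL n e (prj A hdecomp h e)) (cjL n e x)
      = polar n x e • prj A hdecomp (h * g) e - (if h = 1 then x else 0) := by
  obtain ⟨s, hs, hs0, -⟩ := prj_exists_sum A hdecomp e
  have hsum : ∑ l ∈ s, cjL n e (prj A hdecomp l e) = cjL n e e := by
    rw [← map_sum]; congr 1; exact hs.symm
  have hdec : ∑ l ∈ s, mul (cjL n e (prj A hdecomp l e)) (cjL n e x) = cjL n e x := by
    have h1 : (∑ l ∈ s, mul (cjL n e (prj A hdecomp l e))) = mul (cjL n e e) := by
      rw [← map_sum, hsum]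
    calc ∑ l ∈ s, mul (cjL n e (prj A hdecomp l e)) (cjL n e x)
        = (∑ l ∈ s, mul (cjL n e (prj A hdecomp l e))) (cjL n e x) := by
          rw [LinearMap.sum_apply]
    _ = mul (cjL n e e) (cjL n e x) := by rw [h1]
    _ = cjL n e x := by rw [cjL_e n e hne, hle]
  have h5 := congrArg (prj A hdecomp (h * g)) hdec
  rw [map_sum] at h5
  have hT : ∀ l ∈ s, prj A hdecomp (h * g) (mul (cjL n e (prj A hdecomp l e)) (cjL n e x))
      = if l = h then mul (cjL n e (prj A hdecomp h e)) (cjL n e x) else 0 := by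
    intro l _
    by_cases hlh : l = h
    · subst hlh
      rw [if_pos rfl]
      exact prj_of_mem A hdecomp (hp l g _ (prj_mem A hdecomp l e) x hx)
    · rw [if_neg hlh]
      refine prj_of_mem_ne A hdecomp (hp l g _ (prj_mem A hdecomp l e) x hx) ?_
      exact fun hc => hlh (mul_right_cancel hc)
  rw [Finset.sum_congr rfl hT, Finset.sum_ite_eq' s h] at h5
  have hL : prj A hdecomp (h * g) (cjL n e x)
      = polar n x e • prj A hdecomp (h * g) e - (if h = 1 then x else 0) := by
    rw [cjL_apply, _root_.map_sub, _root_.map_smul]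
    congr 1
    by_cases h1 : h = 1
    · subst h1
      rw [if_pos rfl, one_mul]
      exact prj_of_mem A hdecomp hx
    · rw [if_neg h1]
      refine prj_of_mem_ne A hdecomp hx ?_
      intro hc
      exact h1 (by rwa [right_eq_mul] at hc)
  by_cases hh : h ∈ s
  · rw [if_pos hh] at h5
    rw [h5, hL]
  · rw [if_neg hh] at h5
    have hz : prj A hdecomp h e = 0 := hs0 h hh
    rw [hz, map_zero (cjL n e), map_zero mul, LinearMap.zero_apply]
    exact h5.trans hL

end GradingLemmas
section ForwardLemma
open QuadraticMap DirectSum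
variable {k : Type*} [Field k] {C : Type*} [AddCommGroup C] [Module k C]
variable {G : Type*} [Group G] [DecidableEq G]
variable (mul : C →ₗ[k] C →ₗ[k] C) (n : QuadraticForm k C) (e : C)
variable (A : G → Submodule k C)

lemma forward_cj_stable
    (hnondeg : ∀ x : C, (∀ y : C, polar n x y = 0) → x = 0)
    (hcomp : ∀ x y : C, n (mul x y) = n x * n y)
    (hle : ∀ x : C, mul e x = x) (hre : ∀ x : C, mul x e = x)
    (hdecomp : DirectSum.IsInternal A)
    (hm : ∀ g h : G, ∀ x ∈ A g, ∀ y ∈ A h, mul x y ∈ A (g * h)) :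
    ∀ g : G, ∀ x ∈ A g, cjL n e x ∈ A g := by
  have hhom : ∀ g : G, ∀ x ∈ A g, mul (prj A hdecomp 1 e) x = x := by
    intro g x hx
    obtain ⟨s, hs, hs0, -⟩ := prj_exists_sum A hdecomp e
    have hdec : ∑ l ∈ s, mul (prj A hdecomp l e) x = x := by
      calc ∑ l ∈ s, mul (prj A hdecomp l e) x
          = (∑ l ∈ s, mul (prj A hdecomp l e)) x := (LinearMap.sum_apply _ _ _).symm
      _ = mul e x := by rw [← map_sum mul _ s, ← hs]
      _ = x := hle x
    have h5 := congrArg (prj A hdecomp g) hdec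
    rw [map_sum] at h5
    have hT : ∀ l ∈ s, prj A hdecomp g (mul (prj A hdecomp l e) x)
        = if l = 1 then mul (prj A hdecomp 1 e) x else 0 := by
      intro l _
      by_cases hl : l = 1
      · subst hl
        rw [if_pos rfl]
        refine prj_of_mem A hdecomp ?_
        have := hm 1 g _ (prj_mem A hdecomp 1 e) x hx
        rwa [one_mul] at this
      · rw [if_neg hl]
        refine prj_of_mem_ne A hdecomp (hm l g _ (prj_mem A hdecomp l e) x hx) ?_
        exact fun hc => hl (by rwa [mul_eq_right] at hc)
    rw [Finset.sum_congr rfl hT, Finset.sum_ite_eq' s 1, prj_of_mem A hdecomp hx] at h5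
    by_cases h1s : 1 ∈ s
    · rw [if_pos h1s] at h5; exact h5
    · rw [if_neg h1s] at h5
      rw [hs0 1 h1s, map_zero mul, LinearMap.zero_apply]
      exact h5
  have hunit : ∀ z : C, mul (prj A hdecomp 1 e) z = z := by
    intro z
    obtain ⟨t, ht, -, -⟩ := prj_exists_sum A hdecomp z
    calc mul (prj A hdecomp 1 e) z
        = mul (prj A hdecomp 1 e) (∑ i ∈ t, prj A hdecomp i z) := by rw [← ht]
    _ = ∑ i ∈ t, mul (prj A hdecomp 1 e) (prj A hdecomp i z) := map_sum _ _ _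
    _ = ∑ i ∈ t, prj A hdecomp i z :=
        Finset.sum_congr rfl (fun i _ => hhom i _ (prj_mem A hdecomp i z))
    _ = z := ht.symm
  have he1 : e ∈ A 1 := by
    have h1 : mul (prj A hdecomp 1 e) e = prj A hdecomp 1 e := hre _
    have h2 : mul (prj A hdecomp 1 e) e = e := hunit e
    rw [h1] at h2
    rw [← h2]
    exact prj_mem A hdecomp 1 e
  intro g x hx
  by_cases hg : g = 1
  · subst hg
    rw [cjL_apply]
    exact Submodule.sub_mem _ (Submodule.smul_mem _ _ he1) hx
  · have hq := quad_id mul n e hnondeg hcomp hle hre x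
    have h3 : polar n x e • x = mul x x + n x • e := by rw [hq]; abel
    have h5 := congrArg (prj A hdecomp g) h3
    rw [map_add, _root_.map_smul, _root_.map_smul, prj_of_mem A hdecomp hx] at h5
    have hz1 : prj A hdecomp g (mul x x) = 0 := by
      refine prj_of_mem_ne A hdecomp (hm g g x hx x hx) ?_
      exact fun hc => hg (by rwa [mul_eq_left] at hc)
    have hz2 : prj A hdecomp g e = 0 :=
      prj_of_mem_ne A hdecomp he1 (fun hc => hg hc.symm)
    rw [hz1, hz2, smul_zero, add_zero] at h5
    rcases smul_eq_zero.mp h5 with hax | hx0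
    · rw [cjL_apply, hax, zero_smul, zero_sub]
      exact Submodule.neg_mem _ hx
    · rw [hx0, map_zero]
      exact Submodule.zero_mem _

end ForwardLemma
section ParaUnit
open QuadraticMap DirectSum
variable {k : Type*} [Field k] {C : Type*} [AddCommGroup C] [Module k C]
variable {G : Type*} [Group G] [DecidableEq G]
variable (mul : C →ₗ[k] C →ₗ[k] C) (n : QuadraticForm k C) (e : C)
variable (A : G → Submodule k C)

lemma polar_finset_sum_left {ι : Type*} (s : Finset ι) (f : ι → C) (y : C) :
    polar n (∑ i ∈ s, f i) y = ∑ i ∈ s, polar n (f i) y := by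
  classical
  induction s using Finset.induction with
  | empty => simp [polar_zero_left]
  | insert a s h ih => rw [Finset.sum_insert h, Finset.sum_insert h, polar_add_left, ih]

lemma finrank_le_two_contra {v w : C} (hdim : 4 ≤ Module.finrank k C)
    (hspan : ∀ z : C, z ∈ Submodule.span k ({v, w} : Set C)) : False := by
  classical
  have htop : Submodule.span k ({v, w} : Set C) = ⊤ :=
    eq_top_iff.mpr (fun z _ => hspan z)
  have h2 : Module.finrank k ↥(Submodule.span k ({v, w} : Set C)) ≤ 2 := by
    have h3 := finrank_span_le_card (R := k) ({v, w} : Set C)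
    refine h3.trans ?_
    have h4 : ({v, w} : Set C).toFinset ⊆ ({v, w} : Finset C) := by
      intro x hx
      simp only [Set.mem_toFinset, Set.mem_insert_iff, Set.mem_singleton_iff] at hx
      simpa using hx
    refine (Finset.card_le_card h4).trans ?_
    exact (Finset.card_insert_le _ _).trans (by simp)
  rw [htop, finrank_top] at h2
  omega

lemma para_unit_mem
    (hnondeg : ∀ x : C, (∀ y : C, polar n x y = 0) → x = 0)
    (hcomp : ∀ x y : C, n (mul x y) = n x * n y)
    (hle : ∀ x : C, mul e x = x) (hre : ∀ x : C, mul x e = x)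
    (hne : n e = 1) (hdim : 4 ≤ Module.finrank k C)
    (hdecomp : DirectSum.IsInternal A)
    (hp : ∀ g h : G, ∀ x ∈ A g, ∀ y ∈ A h, mul (cjL n e x) (cjL n e y) ∈ A (g * h)) :
    e ∈ A 1 := by
  classical
  suffices hzero : ∀ h : G, h ≠ 1 → prj A hdecomp h e = 0 by
    obtain ⟨s, hs, hs0, -⟩ := prj_exists_sum A hdecomp e
    rw [hs]
    refine Submodule.sum_mem _ (fun l _ => ?_)
    by_cases hl1 : l = 1
    · subst hl1; exact prj_mem A hdecomp 1 e
    · rw [hzero l hl1]; exact Submodule.zero_mem _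
  by_contra hcon
  push_neg at hcon
  obtain ⟨h₀, h₀ne, h₀nz⟩ := hcon
  have hD := dagger mul n e A hne hre hdecomp hp
  have hDD := ddagger mul n e A hne hle hdecomp hp
  have R1 : ∀ h : G, h ≠ 1 →
      (polar n (prj A hdecomp h e) e - (1 + polar n (prj A hdecomp 1 e) e))
        • prj A hdecomp h e = 0 := by
    intro h hne1
    have h1 := hD 1 (prj A hdecomp 1 e) (prj_mem A hdecomp 1 e) h
    have h2 := hDD h (prj A hdecomp h e) (prj_mem A hdecomp h e) 1
    rw [one_mul] at h1 h2
    rw [if_neg hne1, sub_zero] at h1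
    rw [if_pos rfl] at h2
    rw [h2] at h1
    calc (polar n (prj A hdecomp h e) e - (1 + polar n (prj A hdecomp 1 e) e))
          • prj A hdecomp h e
        = (polar n (prj A hdecomp h e) e • prj A hdecomp h e - prj A hdecomp h e)
          - polar n (prj A hdecomp 1 e) e • prj A hdecomp h e := by module
    _ = 0 := by rw [h1, sub_self]
  have quadkey : ∀ l : G, l ≠ 1 →
      (polar n (prj A hdecomp l e) e * polar n (prj A hdecomp l e) e - n (prj A hdecomp l e)) • e
        - polar n (prj A hdecomp l e) e • prj A hdecomp l e
        = polar n (prj A hdecomp l e) e • prj A hdecomp (l * l) e := by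
    intro l hl
    have h1 := hD l (prj A hdecomp l e) (prj_mem A hdecomp l e) l
    rw [if_neg hl, sub_zero] at h1
    have h2 := quad_id mul n e hnondeg hcomp hle hre (cjL n e (prj A hdecomp l e))
    rw [a_cjL n e hne, n_cjL n e hne] at h2
    rw [h2] at h1
    rw [cjL_apply] at h1
    rw [← h1]
    module
  have enz : e ≠ 0 := by
    intro h0
    rw [h0, map_zero] at hne
    exact one_ne_zero hne.symm
  by_cases hγ : (1 : k) + polar n (prj A hdecomp 1 e) e = 0
  · -- characteristic-3 branch
    have c1v : polar n (prj A hdecomp 1 e) e = -1 := by linear_combination hγ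
    have callc : ∀ h : G, h ≠ 1 → polar n (prj A hdecomp h e) e = 0 := by
      intro h hne1
      have h1 := R1 h hne1
      rw [hγ, sub_zero] at h1
      rcases smul_eq_zero.mp h1 with h3 | h3
      · exact h3
      · rw [h3]; exact polar_zero_left _ _
    have e1nz : prj A hdecomp 1 e ≠ 0 := by
      intro h0
      rw [h0, polar_zero_left] at c1v
      exact one_ne_zero (by linear_combination c1v)
    have three0 : (3 : k) = 0 := by
      obtain ⟨s, hs, hs0, -⟩ := prj_exists_sum A hdecomp e
      have h1s : (1 : G) ∈ s := by
        by_contra h1s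
        exact e1nz (hs0 1 h1s)
      have hsumc : polar n e e = ∑ l ∈ s, polar n (prj A hdecomp l e) e := by
        have h1 := congrArg (fun z => polar n z e) hs
        try simp only at h1
        rw [h1]
        exact polar_finset_sum_left n s _ e
      have hc1 : ∑ l ∈ s, polar n (prj A hdecomp l e) e
          = polar n (prj A hdecomp 1 e) e :=
        Finset.sum_eq_single_of_mem 1 h1s (fun b _ hb => callc b hb)
      have h2 : polar n e e = 2 := polar_ee n e hne
      rw [hsumc, hc1, c1v] at h2
      linear_combination -h2
    set d := e - prj A hdecomp 1 e with hd
    have dnz : d ≠ 0 := by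
      intro h0
      have h1 := congrArg (prj A hdecomp h₀) h0
      rw [map_zero, hd, _root_.map_sub] at h1
      rw [prj_of_mem_ne A hdecomp (prj_mem A hdecomp 1 e) (Ne.symm h₀ne), sub_zero] at h1
      exact h₀nz h1
    have ad0 : polar n d e = 0 := by
      rw [hd, polar_sub_left, polar_ee n e hne, c1v]
      linear_combination three0
    have M1 : ∀ g : G, ∀ x ∈ A g, mul (cjL n e x) (prj A hdecomp 1 e)
        = x + x - polar n x e • e - polar n x e • prj A hdecomp g e := by
      intro g x hx
      have h1 := hD g x hx 1
      rw [mul_one, if_pos rfl] at h1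
      have h2 : cjL n e (prj A hdecomp 1 e) = -e - prj A hdecomp 1 e := by
        rw [cjL_apply, c1v]; module
      rw [h2] at h1
      have h3 : mul (cjL n e x) (-e - prj A hdecomp 1 e)
          = -(cjL n e x) - mul (cjL n e x) (prj A hdecomp 1 e) := by
        rw [_root_.map_sub, _root_.map_neg, hre]
      rw [h3] at h1
      have h4 : mul (cjL n e x) (prj A hdecomp 1 e)
          = -(cjL n e x) - (polar n x e • prj A hdecomp g e - x) := by
        rw [← h1]; abel
      rw [h4, cjL_apply]
      module
    have M1L : ∀ g : G, ∀ x ∈ A g, mul (prj A hdecomp 1 e) (cjL n e x)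
        = x + x - polar n x e • e - polar n x e • prj A hdecomp g e := by
      intro g x hx
      have h1 := hDD g x hx 1
      rw [one_mul, if_pos rfl] at h1
      have h2 : cjL n e (prj A hdecomp 1 e) = -e - prj A hdecomp 1 e := by
        rw [cjL_apply, c1v]; module
      rw [h2] at h1
      have h3 : mul (-e - prj A hdecomp 1 e) (cjL n e x)
          = -(cjL n e x) - mul (prj A hdecomp 1 e) (cjL n e x) := by
        simp only [_root_.map_sub, _root_.map_neg, LinearMap.sub_apply, LinearMap.neg_apply, hle]
      rw [h3] at h1
      have h4 : mul (prj A hdecomp 1 e) (cjL n e x)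
          = -(cjL n e x) - (polar n x e • prj A hdecomp g e - x) := by
        rw [← h1]; abel
      rw [h4, cjL_apply]
      module
    have h3x : ∀ y : C, y + y + y = 0 := by
      intro y
      have h1 : (3 : k) • y = 0 := by rw [three0, zero_smul]
      rw [← h1]; module
    have M2 : ∀ g : G, ∀ x ∈ A g, mul (cjL n e x) d
        = polar n x e • e + polar n x e • e + polar n x e • prj A hdecomp g e := by
      intro g x hx
      have h1 : mul (cjL n e x) d = cjL n e x - mul (cjL n e x) (prj A hdecomp 1 e) := by
        rw [hd, _root_.map_sub, hre]
      rw [h1, M1 g x hx]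
      calc cjL n e x - (x + x - polar n x e • e - polar n x e • prj A hdecomp g e)
          = (polar n x e • e + polar n x e • e + polar n x e • prj A hdecomp g e)
            - (x + x + x) := by rw [cjL_apply]; module
      _ = _ := by rw [h3x x, sub_zero]
    have M2L : ∀ g : G, ∀ x ∈ A g, mul d (cjL n e x)
        = polar n x e • e + polar n x e • e + polar n x e • prj A hdecomp g e := by
      intro g x hx
      have h1 : mul d (cjL n e x) = cjL n e x - mul (prj A hdecomp 1 e) (cjL n e x) := by
        rw [hd, _root_.map_sub mul, LinearMap.sub_apply, hle]
      rw [h1, M1L g x hx]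
      calc cjL n e x - (x + x - polar n x e • e - polar n x e • prj A hdecomp g e)
          = (polar n x e • e + polar n x e • e + polar n x e • prj A hdecomp g e)
            - (x + x + x) := by rw [cjL_apply]; module
      _ = _ := by rw [h3x x, sub_zero]
    have comm : ∀ z : C, mul z d = mul d z := by
      have hcj : ∀ g : G, ∀ x ∈ A g, mul (cjL n e x) d = mul d (cjL n e x) := by
        intro g x hx
        rw [M2 g x hx, M2L g x hx]
      intro z
      obtain ⟨t, ht, -, -⟩ := prj_exists_sum A hdecomp (cjL n e z)
      have hz : z = ∑ i ∈ t, cjL n e (prj A hdecomp i (cjL n e z)) := by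
        calc z = cjL n e (cjL n e z) := (cjL_cjL n e hne z).symm
        _ = cjL n e (∑ i ∈ t, prj A hdecomp i (cjL n e z)) := by rw [← ht]
        _ = ∑ i ∈ t, cjL n e (prj A hdecomp i (cjL n e z)) := map_sum _ _ _
      rw [hz, map_sum mul, LinearMap.sum_apply, map_sum (mul d)]
      exact Finset.sum_congr rfl (fun i _ => hcj i _ (prj_mem A hdecomp i (cjL n e z)))
    have ed0 : ∀ l : G, l ≠ 1 → mul (prj A hdecomp l e) d = 0 := by
      intro l hl
      have hcjl : cjL n e (prj A hdecomp l e) = -(prj A hdecomp l e) := by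
        rw [cjL_apply, callc l hl, zero_smul, zero_sub]
      have h2 := M2 l (prj A hdecomp l e) (prj_mem A hdecomp l e)
      rw [hcjl, callc l hl, zero_smul, zero_smul, add_zero, add_zero] at h2
      rw [_root_.map_neg mul, LinearMap.neg_apply] at h2
      exact neg_eq_zero.mp h2
    have dd0 : mul d d = 0 := by
      obtain ⟨s, hs, hs0, -⟩ := prj_exists_sum A hdecomp e
      have h1s : (1 : G) ∈ s := by
        by_contra h1s
        exact e1nz (hs0 1 h1s)
      have hde : d = ∑ l ∈ s.erase 1, prj A hdecomp l e := by
        have h2 : prj A hdecomp 1 e + ∑ l ∈ s.erase 1, prj A hdecomp l e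
            = ∑ l ∈ s, prj A hdecomp l e :=
          Finset.add_sum_erase s (fun l => prj A hdecomp l e) h1s
        have h3 : e = prj A hdecomp 1 e + ∑ l ∈ s.erase 1, prj A hdecomp l e := by
          rw [h2]; exact hs
        have h4 : d = (prj A hdecomp 1 e + ∑ l ∈ s.erase 1, prj A hdecomp l e)
            - prj A hdecomp 1 e := by rw [← h3, ← hd]
        rw [h4]; abel
      calc mul d d = mul (∑ l ∈ s.erase 1, prj A hdecomp l e) d := by rw [← hde]
      _ = ∑ l ∈ s.erase 1, mul (prj A hdecomp l e) d := by
          rw [map_sum mul, LinearMap.sum_apply]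
      _ = 0 := Finset.sum_eq_zero (fun l hl => ed0 l (Finset.ne_of_mem_erase hl))
    have nd0 : n d = 0 := by
      have h1 := quad_id mul n e hnondeg hcomp hle hre d
      rw [dd0, ad0, zero_smul, zero_sub] at h1
      have h2 : n d • e = 0 := by rw [← neg_eq_zero]; exact h1.symm
      rcases smul_eq_zero.mp h2 with h | h
      · exact h
      · exact absurd h enz
    have final : ∀ z : C, polar n d z = 0 := by
      intro z
      have hql := quad_lin mul n e hnondeg hcomp hle hre z d
      rw [← comm z] at hql
      rw [ad0, zero_smul, add_zero] at hql
      have hL : n (mul z d + mul z d) = 0 := by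
        have h1 : mul z d + mul z d = (2 : k) • mul z d := by module
        rw [h1, QuadraticMap.map_smul, hcomp, nd0]
        simp
      rw [hql, n_sub' n, QuadraticMap.map_smul, QuadraticMap.map_smul, nd0, hne,
        polar_smul_left, polar_smul_right] at hL
      rw [ad0] at hL
      have hp2 : polar n z d * polar n z d = 0 := by
        simp only [smul_eq_mul] at hL
        linear_combination hL
      rw [polar_comm]
      exact mul_self_eq_zero.mp hp2
    exact dnz (hnondeg d final)
  · -- γ ≠ 0 branch
    have hnvalg : ∀ l : G, l ≠ 1 → prj A hdecomp l e ≠ 0 →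
        n (prj A hdecomp l e) = polar n (prj A hdecomp l e) e * polar n (prj A hdecomp l e) e
          - polar n (prj A hdecomp l e) e := by
      intro l hl hlnz
      have h1 := congrArg (prj A hdecomp l) (quadkey l hl)
      rw [_root_.map_sub, _root_.map_smul, _root_.map_smul, _root_.map_smul] at h1
      rw [prj_of_mem A hdecomp (prj_mem A hdecomp l e)] at h1
      have h2 : prj A hdecomp l (prj A hdecomp (l * l) e) = 0 := by
        refine prj_of_mem_ne A hdecomp (prj_mem A hdecomp (l * l) e) ?_
        exact fun hc => hl (mul_eq_right.mp hc)
      rw [h2, smul_zero] at h1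
      have h3 : (polar n (prj A hdecomp l e) e * polar n (prj A hdecomp l e) e
          - n (prj A hdecomp l e) - polar n (prj A hdecomp l e) e) • prj A hdecomp l e = 0 := by
        calc (polar n (prj A hdecomp l e) e * polar n (prj A hdecomp l e) e
              - n (prj A hdecomp l e) - polar n (prj A hdecomp l e) e) • prj A hdecomp l e
            = (polar n (prj A hdecomp l e) e * polar n (prj A hdecomp l e) e
              - n (prj A hdecomp l e)) • prj A hdecomp l e
              - polar n (prj A hdecomp l e) e • prj A hdecomp l e := by module
        _ = 0 := h1
      rcases smul_eq_zero.mp h3 with h | h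
      · linear_combination -h
      · exact absurd h hlnz
    have R3g : ∀ l : G, l ≠ 1 → prj A hdecomp l e ≠ 0 → ∀ m : G, m ≠ l → m ≠ l * l →
        polar n (prj A hdecomp l e) e • prj A hdecomp m e = 0 := by
      intro l hl hlnz m hm1 hm2
      have h1 := congrArg (prj A hdecomp m) (quadkey l hl)
      rw [_root_.map_sub, _root_.map_smul, _root_.map_smul, _root_.map_smul] at h1
      rw [prj_of_mem_ne A hdecomp (prj_mem A hdecomp l e) (Ne.symm hm1)] at h1
      rw [prj_of_mem_ne A hdecomp (prj_mem A hdecomp (l * l) e) (Ne.symm hm2)] at h1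
      rw [smul_zero, sub_zero] at h1
      rw [hnvalg l hl hlnz] at h1
      have h2 : (polar n (prj A hdecomp l e) e * polar n (prj A hdecomp l e) e
          - (polar n (prj A hdecomp l e) e * polar n (prj A hdecomp l e) e
            - polar n (prj A hdecomp l e) e)) = polar n (prj A hdecomp l e) e := by ring
      rw [h2] at h1
      exact h1
    have ch0 : polar n (prj A hdecomp h₀ e) e = 1 + polar n (prj A hdecomp 1 e) e := by
      rcases smul_eq_zero.mp (R1 h₀ h₀ne) with h | h
      · linear_combination h
      · exact absurd h h₀nz
    have chnz : polar n (prj A hdecomp h₀ e) e ≠ 0 := by rw [ch0]; exact hγ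
    have R3 : ∀ m : G, m ≠ h₀ → m ≠ h₀ * h₀ → prj A hdecomp m e = 0 := by
      intro m hm1 hm2
      rcases smul_eq_zero.mp (R3g h₀ h₀ne h₀nz m hm1 hm2) with h | h
      · exact absurd h chnz
      · exact h
    by_cases hsq : h₀ * h₀ = 1
    · -- shape Y : supp ⊆ {1, h₀}
      have hout : ∀ m : G, m ≠ 1 → m ≠ h₀ → prj A hdecomp m e = 0 := by
        intro m hm1 hmh
        exact R3 m hmh (by rw [hsq]; exact hm1)
      have hE1 : e = prj A hdecomp 1 e + prj A hdecomp h₀ e := by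
        obtain ⟨s, hs, hs0, hsnz⟩ := prj_exists_sum A hdecomp e
        have hsub : s ⊆ {1, h₀} := by
          intro l hl
          by_contra hlnot
          simp only [Finset.mem_insert, Finset.mem_singleton] at hlnot
          push_neg at hlnot
          exact hsnz l hl (hout l hlnot.1 hlnot.2)
        have h2 : e = ∑ l ∈ ({1, h₀} : Finset G), prj A hdecomp l e :=
          hs.trans (Finset.sum_subset hsub (fun x _ hx => hs0 x hx))
        exact h2.trans (Finset.sum_pair (fun hc => h₀ne hc.symm))
      have hsum2 : polar n (prj A hdecomp 1 e) e + polar n (prj A hdecomp h₀ e) e = 2 := by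
        have h1 := congrArg (fun z => polar n z e) hE1
        try simp only at h1
        rw [polar_add_left] at h1
        rw [← h1]
        exact polar_ee n e hne
      have c1nz : polar n (prj A hdecomp 1 e) e ≠ 0 := by
        intro h0
        have h1 : (1 : k) = 0 := by linear_combination ch0 + 2 * h0 - hsum2
        exact one_ne_zero h1
      have hnu : n (cjL n e (prj A hdecomp h₀ e)) ≠ 0 := by
        rw [n_cjL n e hne, hnvalg h₀ h₀ne h₀nz]
        intro h0
        have h1 : polar n (prj A hdecomp h₀ e) e * polar n (prj A hdecomp 1 e) e = 0 := by
          linear_combination h0 - (polar n (prj A hdecomp h₀ e) e) * ch0 + polar n (prj A hdecomp h₀ e) e * (ch0 - ch0)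
        rcases mul_eq_zero.mp h1 with h | h
        · exact chnz h
        · exact c1nz h
      have Rinj : ∀ z : C, mul z (cjL n e (prj A hdecomp h₀ e)) = 0 → z = 0 := by
        intro z hz
        have h1 := cancel_r mul n e hnondeg hcomp hre z (cjL n e (prj A hdecomp h₀ e))
        rw [hz, map_zero mul, LinearMap.zero_apply] at h1
        rcases smul_eq_zero.mp h1.symm with h | h
        · exact absurd h hnu
        · exact h
      have cj_vanish : ∀ z : C, cjL n e z = 0 → z = 0 := by
        intro z hz
        have h1 := congrArg (cjL n e) hz
        rw [cjL_cjL n e hne, map_zero] at h1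
        exact h1
      have K1 : ∀ g : G, g ≠ 1 → g ≠ h₀ → ∀ x ∈ A g, x = 0 := by
        intro g hg1 hgh x hx
        have h1 := hD g x hx h₀
        rw [if_neg h₀ne, sub_zero] at h1
        have h2 : prj A hdecomp (g * h₀) e = 0 := by
          refine hout (g * h₀) ?_ ?_
          · intro hc
            refine hgh ?_
            calc g = g * (h₀ * h₀) := by rw [hsq, mul_one]
            _ = (g * h₀) * h₀ := by rw [mul_assoc]
            _ = h₀ := by rw [hc, one_mul]
          · intro hc
            exact hg1 (mul_eq_right.mp hc)
        rw [h2, smul_zero] at h1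
        exact cj_vanish x (Rinj _ h1)
      have KA1 : ∀ x ∈ A 1,
          x ∈ Submodule.span k ({prj A hdecomp 1 e, prj A hdecomp h₀ e} : Set C) := by
        intro x hx
        set z := polar n (prj A hdecomp 1 e) e • x - polar n x e • prj A hdecomp 1 e with hzd
        have hz : z ∈ A 1 :=
          Submodule.sub_mem _ (Submodule.smul_mem _ _ hx)
            (Submodule.smul_mem _ _ (prj_mem A hdecomp 1 e))
        have haz : polar n z e = 0 := by
          rw [hzd, polar_sub_left, polar_smul_left, polar_smul_left, smul_eq_mul, smul_eq_mul]
          ring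
        have h1 := hD 1 z hz h₀
        rw [if_neg h₀ne, sub_zero, haz, zero_smul] at h1
        have h3 := cj_vanish z (Rinj _ h1)
        have h4 : polar n (prj A hdecomp 1 e) e • x = polar n x e • prj A hdecomp 1 e := by
          rw [hzd] at h3
          rw [sub_eq_zero] at h3
          exact h3
        have h5 : x = (polar n (prj A hdecomp 1 e) e)⁻¹ • (polar n x e • prj A hdecomp 1 e) := by
          rw [← h4, smul_smul, inv_mul_cancel₀ c1nz, one_smul]
        rw [h5]
        exact Submodule.smul_mem _ _ (Submodule.smul_mem _ _ (Submodule.subset_span (by simp)))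
      have KAh : ∀ x ∈ A h₀,
          x ∈ Submodule.span k ({prj A hdecomp 1 e, prj A hdecomp h₀ e} : Set C) := by
        intro x hx
        set z := polar n (prj A hdecomp h₀ e) e • x - polar n x e • prj A hdecomp h₀ e with hzd
        have hz : z ∈ A h₀ :=
          Submodule.sub_mem _ (Submodule.smul_mem _ _ hx)
            (Submodule.smul_mem _ _ (prj_mem A hdecomp h₀ e))
        have haz : polar n z e = 0 := by
          rw [hzd, polar_sub_left, polar_smul_left, polar_smul_left, smul_eq_mul, smul_eq_mul]
          ring
        have h1 := hD h₀ z hz h₀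
        rw [if_neg h₀ne, sub_zero, haz, zero_smul] at h1
        have h3 := cj_vanish z (Rinj _ h1)
        have h4 : polar n (prj A hdecomp h₀ e) e • x = polar n x e • prj A hdecomp h₀ e := by
          rw [hzd] at h3
          rw [sub_eq_zero] at h3
          exact h3
        have h5 : x = (polar n (prj A hdecomp h₀ e) e)⁻¹ • (polar n x e • prj A hdecomp h₀ e) := by
          rw [← h4, smul_smul, inv_mul_cancel₀ chnz, one_smul]
        rw [h5]
        exact Submodule.smul_mem _ _ (Submodule.smul_mem _ _ (Submodule.subset_span (by simp)))
      have hspan : ∀ z : C,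
          z ∈ Submodule.span k ({prj A hdecomp 1 e, prj A hdecomp h₀ e} : Set C) := by
        intro z
        obtain ⟨t, ht, -, -⟩ := prj_exists_sum A hdecomp z
        rw [ht]
        refine Submodule.sum_mem _ (fun i _ => ?_)
        by_cases hi1 : i = 1
        · rw [hi1]; exact KA1 _ (prj_mem A hdecomp 1 z)
        · by_cases hih : i = h₀
          · rw [hih]; exact KAh _ (prj_mem A hdecomp h₀ z)
          · rw [K1 i hi1 hih _ (prj_mem A hdecomp i z)]
            exact Submodule.zero_mem _
      exact finrank_le_two_contra hdim hspan
    · -- shape X : supp ⊆ {h₀, h₀²}, h₀³ = 1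
      have e1z : prj A hdecomp 1 e = 0 := R3 1 (Ne.symm h₀ne) (fun hc => hsq hc.symm)
      have c10 : polar n (prj A hdecomp 1 e) e = 0 := by
        rw [e1z]; exact polar_zero_left _ _
      have chv : polar n (prj A hdecomp h₀ e) e = 1 := by rw [ch0, c10, add_zero]
      have hhh : h₀ ≠ h₀ * h₀ := fun hc => h₀ne (mul_eq_right.mp hc.symm)
      have hE2 : e = prj A hdecomp h₀ e + prj A hdecomp (h₀ * h₀) e := by
        obtain ⟨s, hs, hs0, hsnz⟩ := prj_exists_sum A hdecomp e
        have hsub : s ⊆ {h₀, h₀ * h₀} := by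
          intro l hl
          by_contra hlnot
          simp only [Finset.mem_insert, Finset.mem_singleton] at hlnot
          push_neg at hlnot
          exact hsnz l hl (R3 l hlnot.1 hlnot.2)
        have h2 : e = ∑ l ∈ ({h₀, h₀ * h₀} : Finset G), prj A hdecomp l e :=
          hs.trans (Finset.sum_subset hsub (fun x _ hx => hs0 x hx))
        exact h2.trans (Finset.sum_pair hhh)
      have hsum2 : polar n (prj A hdecomp h₀ e) e + polar n (prj A hdecomp (h₀ * h₀) e) e = 2 := by
        have h1 := congrArg (fun z => polar n z e) hE2
        try simp only at h1
        rw [polar_add_left] at h1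
        rw [← h1]
        exact polar_ee n e hne
      have chh : polar n (prj A hdecomp (h₀ * h₀) e) e = 1 := by
        linear_combination hsum2 - chv
      have ehhnz : prj A hdecomp (h₀ * h₀) e ≠ 0 := by
        intro h0
        rw [h0, polar_zero_left] at chh
        exact one_ne_zero chh.symm
      have hfour : h₀ = h₀ * h₀ * (h₀ * h₀) := by
        by_contra hcon4
        have h1 := R3g (h₀ * h₀) hsq ehhnz h₀ hhh hcon4
        rw [chh, one_smul] at h1
        exact h₀nz h1
      have hcube : h₀ * (h₀ * h₀) = 1 := by
        have h1 : h₀ * 1 = h₀ * (h₀ * (h₀ * h₀)) := by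
          rw [mul_one]
          nth_rewrite 1 [hfour]
          group
        exact (mul_left_cancel h1).symm
      have hc3 : (h₀ * h₀) * h₀ = 1 := by
        rw [mul_assoc]
        exact hcube
      have cjE : cjL n e (prj A hdecomp h₀ e) = prj A hdecomp (h₀ * h₀) e := by
        rw [cjL_apply, chv, one_smul]
        nth_rewrite 1 [hE2]
        abel
      have cjE2 : cjL n e (prj A hdecomp (h₀ * h₀) e) = prj A hdecomp h₀ e := by
        rw [cjL_apply, chh, one_smul]
        nth_rewrite 1 [hE2]
        abel
      have relA : ∀ g : G, ∀ x ∈ A g, cjL n e x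
          = polar n x e • prj A hdecomp (g * (h₀ * h₀)) e
            + polar n x e • prj A hdecomp (g * h₀) e := by
        intro g x hx
        have h1 := hD g x hx (h₀ * h₀)
        rw [if_neg hsq, sub_zero, cjE2] at h1
        have h2 := hD g x hx h₀
        rw [if_neg h₀ne, sub_zero, cjE] at h2
        calc cjL n e x = mul (cjL n e x) e := (hre _).symm
        _ = mul (cjL n e x) (prj A hdecomp h₀ e + prj A hdecomp (h₀ * h₀) e) := by
            rw [← hE2]
        _ = mul (cjL n e x) (prj A hdecomp h₀ e)
            + mul (cjL n e x) (prj A hdecomp (h₀ * h₀) e) := map_add _ _ _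
        _ = polar n x e • prj A hdecomp (g * (h₀ * h₀)) e
            + polar n x e • prj A hdecomp (g * h₀) e := by rw [h1, h2]
      have KA1 : ∀ x ∈ A 1, x = 0 := by
        intro x hx
        have h1 := relA 1 x hx
        rw [one_mul, one_mul] at h1
        have h2 : cjL n e x = polar n x e • e := by
          rw [h1]
          calc polar n x e • prj A hdecomp (h₀ * h₀) e + polar n x e • prj A hdecomp h₀ e
              = polar n x e • (prj A hdecomp h₀ e + prj A hdecomp (h₀ * h₀) e) := by module
          _ = polar n x e • e := by rw [← hE2]
        have h3 := congrArg (cjL n e) h2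
        rw [cjL_cjL n e hne, _root_.map_smul, cjL_e n e hne] at h3
        have h4 := congrArg (prj A hdecomp h₀) h3
        rw [prj_of_mem_ne A hdecomp hx (Ne.symm h₀ne), _root_.map_smul] at h4
        rcases smul_eq_zero.mp h4.symm with h | h
        · rw [h3, h, zero_smul]
        · exact absurd h h₀nz
      have KAh : ∀ x ∈ A h₀, x = polar n x e • prj A hdecomp h₀ e := by
        intro x hx
        have h1 := relA h₀ x hx
        rw [hcube, e1z, smul_zero, zero_add] at h1
        have h3 := congrArg (cjL n e) h1
        rw [cjL_cjL n e hne, _root_.map_smul, cjE2] at h3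
        exact h3
      have KAh2 : ∀ x ∈ A (h₀ * h₀), x = polar n x e • prj A hdecomp (h₀ * h₀) e := by
        intro x hx
        have h1 := relA (h₀ * h₀) x hx
        rw [hfour.symm, hc3, e1z, smul_zero, add_zero] at h1
        have h3 := congrArg (cjL n e) h1
        rw [cjL_cjL n e hne, _root_.map_smul, cjE] at h3
        exact h3
      have Kelse : ∀ g : G, g ≠ 1 → g ≠ h₀ → g ≠ h₀ * h₀ → ∀ x ∈ A g, x = 0 := by
        intro g hg1 hgh hgh2 x hx
        have h1 := relA g x hx
        have hz1 : prj A hdecomp (g * (h₀ * h₀)) e = 0 := by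
          refine R3 _ ?_ ?_
          · intro hc
            have h9 : g = h₀ * (h₀ * h₀)⁻¹ := eq_mul_inv_of_mul_eq hc
            rw [inv_eq_of_mul_eq_one_right hc3] at h9
            exact hgh2 h9
          · intro hc
            exact hg1 (mul_eq_right.mp hc)
        have hz2 : prj A hdecomp (g * h₀) e = 0 := by
          refine R3 _ ?_ ?_
          · intro hc
            exact hg1 (mul_eq_right.mp hc)
          · intro hc
            exact hgh (mul_right_cancel hc)
        rw [hz1, hz2, smul_zero, add_zero] at h1
        have h3 := congrArg (cjL n e) h1
        rw [cjL_cjL n e hne, map_zero] at h3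
        exact h3
      have hspan : ∀ z : C,
          z ∈ Submodule.span k ({prj A hdecomp h₀ e, prj A hdecomp (h₀ * h₀) e} : Set C) := by
        intro z
        obtain ⟨t, ht, -, -⟩ := prj_exists_sum A hdecomp z
        rw [ht]
        refine Submodule.sum_mem _ (fun i _ => ?_)
        by_cases hih : i = h₀
        · rw [hih]
          rw [KAh (prj A hdecomp h₀ z) (prj_mem A hdecomp h₀ z)]
          exact Submodule.smul_mem _ _ (Submodule.subset_span (by simp))
        · by_cases hih2 : i = h₀ * h₀
          · rw [hih2]
            rw [KAh2 (prj A hdecomp (h₀ * h₀) z) (prj_mem A hdecomp (h₀ * h₀) z)]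
            exact Submodule.smul_mem _ _ (Submodule.subset_span (by simp))
          · by_cases hi1 : i = 1
            · rw [hi1]
              rw [KA1 _ (prj_mem A hdecomp 1 z)]
              exact Submodule.zero_mem _
            · rw [Kelse i hi1 hih hih2 _ (prj_mem A hdecomp i z)]
              exact Submodule.zero_mem _
      exact finrank_le_two_contra hdim hspan

end ParaUnit
/-- For a Hurwitz algebra `(C, ·, n)` of dimension at least 4 with
unit `e`, a direct sum decomposition `C = ⊕_{g ∈ G} C_g` is a group grading of
`(C, ·)` if and only if it is a group grading of the attached para-Hurwitz
algebra `(C, •)`, where `x • y = x̄ · ȳ` and `x̄ = n(x,e) e - x`. -/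
theorem hurwitz_paraHurwitz_gradings_coincide
    {k : Type*} [Field k] {C : Type*} [AddCommGroup C] [Module k C]
    (mul : C →ₗ[k] C →ₗ[k] C) (n : QuadraticForm k C)
    (hnondeg : ∀ x : C, (∀ y : C, polar n x y = 0) → x = 0)
    (hcomp : ∀ x y : C, n (mul x y) = n x * n y)
    (e : C) (hle : ∀ x : C, mul e x = x) (hre : ∀ x : C, mul x e = x)
    (hdim : 4 ≤ Module.finrank k C)
    {G : Type*} [Group G] [DecidableEq G]
    (A : G → Submodule k C)
    (hdecomp : DirectSum.IsInternal A) :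
    (∀ g h : G, ∀ x ∈ A g, ∀ y ∈ A h, mul x y ∈ A (g * h)) ↔
    (∀ g h : G, ∀ x ∈ A g, ∀ y ∈ A h,
      mul (polar n x e • e - x) (polar n y e • e - y) ∈ A (g * h)) := by
  classical
  have hnontriv : ∃ x : C, x ≠ (0 : C) := by
    by_contra hall
    push_neg at hall
    have hss : Subsingleton C := ⟨fun a b => by rw [hall a, hall b]⟩
    have h0 : Module.finrank k C = 0 := Module.finrank_zero_of_subsingleton
    omega
  have hne : n e = 1 := by
    have h1 := hcomp e e
    rw [hre e] at h1
    have hnez : n e ≠ 0 := by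
      intro h0
      obtain ⟨x, hx⟩ := hnontriv
      refine hx (hnondeg x ?_)
      intro y
      have h2 := hpm_right mul n hcomp e x y
      rw [hle x, hle y, h0, zero_mul] at h2
      exact h2
    have h3 : n e * n e = n e * 1 := by rw [mul_one]; exact h1.symm
    exact mul_left_cancel₀ hnez h3
  constructor
  · intro hm g h x hx y hy
    have hcst := forward_cj_stable mul n e A hnondeg hcomp hle hre hdecomp hm
    have h1 := hm g h _ (hcst g x hx) _ (hcst h y hy)
    rw [cjL_apply, cjL_apply] at h1
    exact h1
  · intro hpraw
    have hp : ∀ g h : G, ∀ x ∈ A g, ∀ y ∈ A h, mul (cjL n e x) (cjL n e y) ∈ A (g * h) := by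
      intro g h x hx y hy
      rw [cjL_apply, cjL_apply]
      exact hpraw g h x hx y hy
    have he1 : e ∈ A 1 := para_unit_mem mul n e A hnondeg hcomp hle hre hne hdim hdecomp hp
    have hcst : ∀ g : G, ∀ x ∈ A g, cjL n e x ∈ A g := by
      intro g x hx
      have h1 := hp g 1 x hx e he1
      rw [cjL_e n e hne, hre, mul_one] at h1
      exact h1
    intro g h x hx y hy
    have h1 := hp g h _ (hcst g x hx) _ (hcst h y hy)
    rw [cjL_cjL n e hne, cjL_cjL n e hne] at h1
    exact h1
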